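/- For every φ, ψ ∈ L¹(Ω,C(X)) with inf_{x∈X} ψ_ω(x) > 0 for ℙ-a.e. ω, and for every T > 0 and ε > 0, the map ω ↦ Q_{ψ,T}(f,ω,φ,ε) is measurable with respect to the σ-algebra ℱ. -/

import Mathlib

open MeasureTheory Filter Set ProbabilityTheory
open scoped ENNReal NNReal

namespace RDSPaper

section Defs

variable {Ω X : Type*} [MeasurableSpace Ω] [MeasurableSpace X] [MetricSpace X]

/-- The iterates `f_ω^n = f_{θ^{n-1}ω} ∘ ⋯ ∘ f_{θω} ∘ f_ω` of the random dynamical system. -/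
def fIter (f : Ω → X → X) (θ : Ω → Ω) (ω : Ω) : ℕ → X → X
  | 0 => id
  | n + 1 => fun x => f (θ^[n] ω) (fIter f θ ω n x)

/-- Birkhoff sums `S_n g_ω(x) = Σ_{i<n} g_{θ^i ω}(f_ω^i x)`. -/
def birk (f : Ω → X → X) (θ : Ω → Ω) (g : Ω → X → ℝ) (ω : Ω) (n : ℕ) (x : X) : ℝ :=
  ∑ i ∈ Finset.range n, g (θ^[i] ω) (fIter f θ ω i x)

/-- Bowen metric `d_n^ω(x,y) = max_{0 ≤ i ≤ n-1} d(f_ω^i x, f_ω^i y)`. -/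
noncomputable def dB (f : Ω → X → X) (θ : Ω → Ω) (ω : Ω) (n : ℕ) (x y : X) : ℝ :=
  (((Finset.range n).sup fun i => nndist (fIter f θ ω i x) (fIter f θ ω i y) : ℝ≥0) : ℝ)

/-- `E` is an `(ω,n,ε)`-separated subset of `Y`. -/
def IsSep (f : Ω → X → X) (θ : Ω → Ω) (ω : Ω) (n : ℕ) (ε : ℝ) (Y : Set X) (E : Finset X) :
    Prop :=
  ↑E ⊆ Y ∧ ∀ x ∈ E, ∀ y ∈ E, x ≠ y → ε < dB f θ ω n x y

/-- `F` is an `(ω,n,ε)`-spanning subset of `Y`. -/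
def IsSpan (f : Ω → X → X) (θ : Ω → Ω) (ω : Ω) (n : ℕ) (ε : ℝ) (Y : Set X) (F : Finset X) :
    Prop :=
  ↑F ⊆ Y ∧ ∀ y ∈ Y, ∃ x ∈ F, dB f θ ω n x y ≤ ε

/-- Membership in `L¹(Ω, C(X))`. -/
def MemL1 (μP : Measure Ω) (g : Ω → X → ℝ) : Prop :=
  Measurable (Function.uncurry g) ∧ (∀ ω, Continuous (g ω)) ∧
    Integrable (fun ω => ⨆ x : X, |g ω x|) μP

/-- The `L¹` norm `‖g‖₁ = ∫_Ω sup_x |g_ω(x)| dℙ(ω)`. -/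
noncomputable def L1norm (μP : Measure Ω) (g : Ω → X → ℝ) : ℝ :=
  ∫ ω, ⨆ x : X, |g ω x| ∂μP

/-- `P_ω(f,φ,n,ε)`: supremum of `Σ_{x ∈ E} exp(S_n φ_ω(x))` over `(ω,n,ε)`-separated sets. -/
noncomputable def sepSum (f : Ω → X → X) (θ : Ω → Ω) (φ : Ω → X → ℝ) (ω : Ω) (n : ℕ)
    (ε : ℝ) : ℝ :=
  sSup {s : ℝ | ∃ E : Finset X, IsSep f θ ω n ε univ E ∧
    s = ∑ x ∈ E, Real.exp (birk f θ φ ω n x)}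

/-- The fiber topological pressure `P_Ω(f,φ)` (via separated sets; the limit as `ε → 0` is a
supremum over `ε > 0` by monotonicity). -/
noncomputable def fiberPres (μP : Measure Ω) (θ : Ω → Ω) (f : Ω → X → X) (φ : Ω → X → ℝ) :
    EReal :=
  ⨆ (ε : ℝ) (_ : 0 < ε),
    Filter.limsup
      (fun n : ℕ => (((n : ℝ)⁻¹ * ∫ ω, Real.log (sepSum f θ φ ω n ε) ∂μP : ℝ) : EReal)) atTop

/-- Induced-time partition element `X_{ω,n} = {x : S_n ψ_ω(x) ≤ T < S_{n+1} ψ_ω(x)}`. -/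
def Xind (f : Ω → X → X) (θ : Ω → Ω) (ψ : Ω → X → ℝ) (ω : Ω) (T : ℝ) (n : ℕ) : Set X :=
  {x | birk f θ ψ ω n x ≤ T ∧ T < birk f θ ψ ω (n + 1) x}

/-- `Q_{ψ,T}(f,ω,φ,ε)`: infimum of `Σ_{n ∈ S_{ω,T}} Σ_{x ∈ F_n} exp(S_n φ_ω(x))` over families
of `(ω,n,ε)`-spanning sets of `X_{ω,n}` (the sum over `n ∈ S_{ω,T}` is the sum over all `n`,
since `F_n ⊆ X_{ω,n} = ∅` for `n ∉ S_{ω,T}`). -/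
noncomputable def Qind (f : Ω → X → X) (θ : Ω → Ω) (φ ψ : Ω → X → ℝ) (ω : Ω) (T ε : ℝ) : ℝ :=
  sInf {s : ℝ | ∃ C : ℕ → Finset X, (∀ n, IsSpan f θ ω n ε (Xind f θ ψ ω T n) (C n)) ∧
    s = ∑' n : ℕ, ∑ x ∈ C n, Real.exp (birk f θ φ ω n x)}

/-- `P_{ψ,T}(f,ω,φ,ε)`: supremum of `Σ_{n ∈ S_{ω,T}} Σ_{x ∈ E_n} exp(S_n φ_ω(x))` over families
of `(ω,n,ε)`-separated sets of `X_{ω,n}`. -/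
noncomputable def PindSep (f : Ω → X → X) (θ : Ω → Ω) (φ ψ : Ω → X → ℝ) (ω : Ω)
    (T ε : ℝ) : ℝ :=
  sSup {s : ℝ | ∃ E : ℕ → Finset X, (∀ n, IsSep f θ ω n ε (Xind f θ ψ ω T n) (E n)) ∧
    s = ∑' n : ℕ, ∑ x ∈ E n, Real.exp (birk f θ φ ω n x)}

/-- The `ψ`-induced fiber topological pressure `P_{ψ,Ω}(f,φ)`, defined via spanning sets. -/
noncomputable def indPres (μP : Measure Ω) (θ : Ω → Ω) (f : Ω → X → X) (φ ψ : Ω → X → ℝ) :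
    EReal :=
  ⨆ (ε : ℝ) (_ : 0 < ε),
    Filter.limsup
      (fun T : ℝ => ((T⁻¹ * ∫ ω, Real.log (Qind f θ φ ψ ω T ε) ∂μP : ℝ) : EReal)) atTop

/-- `Y_{ω,n} = {x : S_n ψ_ω(x) > T}`. -/
def Yind (f : Ω → X → X) (θ : Ω → Ω) (ψ : Ω → X → ℝ) (ω : Ω) (T : ℝ) (n : ℕ) : Set X :=
  {x | T < birk f θ ψ ω n x}

/-- `n`-th term of the partition function `R_{ψ,T}`: supremum of `Σ_{x ∈ E} exp(S_n g_ω(x))`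
over `(ω,n,ε)`-separated sets of `Y_{ω,n}`. -/
noncomputable def Rn (f : Ω → X → X) (θ : Ω → Ω) (g ψ : Ω → X → ℝ) (ω : Ω) (T ε : ℝ)
    (n : ℕ) : ℝ :=
  sSup {s : ℝ | ∃ E : Finset X, IsSep f θ ω n ε (Yind f θ ψ ω T n) E ∧
    s = ∑ x ∈ E, Real.exp (birk f θ g ω n x)}

/-- The partition function `R_{ψ,T}(f,ω,g,ε)`, as an extended nonnegative real since the sum
over `n ∈ G_{ω,T}` may diverge. -/
noncomputable def Rtotal (f : Ω → X → X) (θ : Ω → Ω) (g ψ : Ω → X → ℝ) (ω : Ω)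
    (T ε : ℝ) : ℝ≥0∞ :=
  ∑' n : ℕ, ENNReal.ofReal (Rn f θ g ψ ω T ε n)

/-- The extended-real valued integral `∫_Ω log R_{ψ,T}(f,ω,g,ε) dℙ(ω)`; it is `⊤` when the
partition function is infinite on a non-null set. -/
noncomputable def RlogInt (μP : Measure Ω) (f : Ω → X → X) (θ : Ω → Ω) (g ψ : Ω → X → ℝ)
    (T ε : ℝ) : EReal :=
  haveI := Classical.propDecidable (∀ᵐ ω ∂μP, Rtotal f θ g ψ ω T ε ≠ ⊤)
  if ∀ᵐ ω ∂μP, Rtotal f θ g ψ ω T ε ≠ ⊤ then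
    ((∫ ω, Real.log (Rtotal f θ g ψ ω T ε).toReal ∂μP : ℝ) : EReal)
  else ⊤

/-- Nonlinear weighted spanning-set sum `inf Σ_{x ∈ C} exp(n F(S_n φ_ω(x)/n))`. -/
noncomputable def spanSumF (f : Ω → X → X) (θ : Ω → Ω) (F : ℝ → ℝ) (φ : Ω → X → ℝ) (ω : Ω)
    (n : ℕ) (ε : ℝ) : ℝ :=
  sInf {s : ℝ | ∃ C : Finset X, IsSpan f θ ω n ε univ C ∧
    s = ∑ x ∈ C, Real.exp ((n : ℝ) * F (birk f θ φ ω n x / n))}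

/-- Nonlinear weighted separated-set sum `sup Σ_{x ∈ E} exp(n F(S_n φ_ω(x)/n))`. -/
noncomputable def sepSumF (f : Ω → X → X) (θ : Ω → Ω) (F : ℝ → ℝ) (φ : Ω → X → ℝ) (ω : Ω)
    (n : ℕ) (ε : ℝ) : ℝ :=
  sSup {s : ℝ | ∃ E : Finset X, IsSep f θ ω n ε univ E ∧
    s = ∑ x ∈ E, Real.exp ((n : ℝ) * F (birk f θ φ ω n x / n))}

/-- The nonlinear fiber topological pressure `P_Ω^F(f,φ)`, defined via spanning sets. -/
noncomputable def nlFiberPres (μP : Measure Ω) (θ : Ω → Ω) (f : Ω → X → X) (F : ℝ → ℝ)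
    (φ : Ω → X → ℝ) : EReal :=
  ⨆ (ε : ℝ) (_ : 0 < ε),
    Filter.limsup
      (fun n : ℕ => (((n : ℝ)⁻¹ * ∫ ω, Real.log (spanSumF f θ F φ ω n ε) ∂μP : ℝ) : EReal))
      atTop

/-- Higher-dimensional nonlinear separated-set sum with a linear deformation:
`sup Σ_{x ∈ E} exp(n F(S_n Φ_ω(x)/n) − β S_n ψ_ω(x))`. -/
noncomputable def sepSumFd (f : Ω → X → X) (θ : Ω → Ω) {d : ℕ} (F : (Fin d → ℝ) → ℝ)
    (Φ : Fin d → Ω → X → ℝ) (β : ℝ) (ψ : Ω → X → ℝ) (ω : Ω) (n : ℕ) (ε : ℝ) : ℝ :=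
  sSup {s : ℝ | ∃ E : Finset X, IsSep f θ ω n ε univ E ∧
    s = ∑ x ∈ E, Real.exp ((n : ℝ) * F (fun i => birk f θ (Φ i) ω n x / n)
      - β * birk f θ ψ ω n x)}

/-- The higher-dimensional nonlinear fiber pressure `P_Ω^F(f, Φ − βψ)`. -/
noncomputable def nlFiberPresd (μP : Measure Ω) (θ : Ω → Ω) (f : Ω → X → X) {d : ℕ}
    (F : (Fin d → ℝ) → ℝ) (Φ : Fin d → Ω → X → ℝ) (β : ℝ) (ψ : Ω → X → ℝ) : EReal :=
  ⨆ (ε : ℝ) (_ : 0 < ε),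
    Filter.limsup
      (fun n : ℕ =>
        (((n : ℝ)⁻¹ * ∫ ω, Real.log (sepSumFd f θ F Φ β ψ ω n ε) ∂μP : ℝ) : EReal)) atTop

/-- Higher-dimensional nonlinear induced spanning sum
`inf Σ_{n ∈ S_{ω,T}} Σ_{x ∈ C_n} exp(n F(S_n Φ_ω(x)/n))`. -/
noncomputable def QindFd (f : Ω → X → X) (θ : Ω → Ω) {d : ℕ} (F : (Fin d → ℝ) → ℝ)
    (Φ : Fin d → Ω → X → ℝ) (ψ : Ω → X → ℝ) (ω : Ω) (T ε : ℝ) : ℝ :=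
  sInf {s : ℝ | ∃ C : ℕ → Finset X, (∀ n, IsSpan f θ ω n ε (Xind f θ ψ ω T n) (C n)) ∧
    s = ∑' n : ℕ, ∑ x ∈ C n, Real.exp ((n : ℝ) * F (fun i => birk f θ (Φ i) ω n x / n))}

/-- The higher-dimensional nonlinear `ψ`-induced fiber pressure `P_{ψ,Ω}^F(f,Φ)`. -/
noncomputable def nlIndPres (μP : Measure Ω) (θ : Ω → Ω) (f : Ω → X → X) {d : ℕ}
    (F : (Fin d → ℝ) → ℝ) (Φ : Fin d → Ω → X → ℝ) (ψ : Ω → X → ℝ) : EReal :=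
  ⨆ (ε : ℝ) (_ : 0 < ε),
    Filter.limsup
      (fun T : ℝ => ((T⁻¹ * ∫ ω, Real.log (QindFd f θ F Φ ψ ω T ε) ∂μP : ℝ) : EReal)) atTop

/-- The skew product `Θ(ω,x) = (θω, f_ω x)`. -/
def skew (θ : Ω → Ω) (f : Ω → X → X) : Ω × X → Ω × X := fun p => (θ p.1, f p.1 p.2)

/-- `μ ∈ M_ℙ(f)`: a `Θ`-invariant Borel probability measure on `J = Ω × X` with marginal `ℙ`. -/
structure IsInvariant (μP : Measure Ω) (θ : Ω → Ω) (f : Ω → X → X)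
    (μ : Measure (Ω × X)) : Prop where
  prob : IsProbabilityMeasure μ
  marginal : μ.map Prod.fst = μP
  invariant : μ.map (skew θ f) = μ

/-- The `ω`-section of a subset of `J = Ω × X`. -/
def sect (A : Set (Ω × X)) (ω : Ω) : Set X := {x | (ω, x) ∈ A}

/-- A finite measurable partition of `J = Ω × X`. -/
def IsFinPartition (ξ : Finset (Set (Ω × X))) : Prop :=
  (∀ A ∈ ξ, MeasurableSet A) ∧ ⋃₀ (↑ξ : Set (Set (Ω × X))) = univ ∧
    ∀ A ∈ ξ, ∀ B ∈ ξ, A ≠ B → A ∩ B = ∅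

/-- Entropy `H_{μ_ω}(⋁_{i<n} (f_ω^i)⁻¹ ξ_{θ^i ω})` of the refined partition. -/
noncomputable def Hpart (f : Ω → X → X) (θ : Ω → Ω) (ν : Measure X) (ω : Ω) (n : ℕ)
    (ξ : Finset (Set (Ω × X))) : ℝ :=
  ∑ c : Fin n → {A // A ∈ ξ}, Real.negMulLog
    ((ν (⋂ i : Fin n, fIter f θ ω i ⁻¹' sect ((c i : Set (Ω × X))) (θ^[(i : ℕ)] ω))).toReal)

/-- The disintegration `ω ↦ μ_ω` of a (finite) measure on `Ω × X` over its first marginal. -/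
noncomputable def condK [StandardBorelSpace X] [Nonempty X] (μ : Measure (Ω × X)) :
    Kernel Ω X :=
  haveI := Classical.propDecidable (IsFiniteMeasure μ)
  if h : IsFiniteMeasure μ then haveI := h; μ.condKernel else 0

/-- The fiber measure-theoretic entropy `h^ran_μ(f)`. -/
noncomputable def fiberEntropy [StandardBorelSpace X] [Nonempty X] (μP : Measure Ω)
    (θ : Ω → Ω) (f : Ω → X → X) (μ : Measure (Ω × X)) : EReal :=
  ⨆ (ξ : Finset (Set (Ω × X))) (_ : IsFinPartition ξ),
    Filter.limsup
      (fun n : ℕ => (((n : ℝ)⁻¹ * ∫ ω, Hpart f θ (condK μ ω) ω n ξ ∂μP : ℝ) : EReal)) atTop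

/-- Integral `∫_J g dμ` of a function `g : Ω → X → ℝ` over `J = Ω × X`. -/
noncomputable def intJ (μ : Measure (Ω × X)) (g : Ω → X → ℝ) : ℝ :=
  ∫ p : Ω × X, g p.1 p.2 ∂μ

/-- The weak* topology on measures on `J`, generated by the maps `μ ↦ ∫_J g dμ` for
`g ∈ L¹(Ω, C(X))`. -/
noncomputable def weakTopo (μP : Measure Ω) : TopologicalSpace (Measure (Ω × X)) :=
  ⨅ (g : Ω → X → ℝ) (_ : MemL1 μP g),
    TopologicalSpace.induced (fun μ : Measure (Ω × X) => intJ μ g) inferInstance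

/-- `μ` is an equilibrium state for the pair of potentials `(φ, ψ)`. -/
def IsEquilibrium [StandardBorelSpace X] [Nonempty X] (μP : Measure Ω) (θ : Ω → Ω)
    (f : Ω → X → X) (φ ψ : Ω → X → ℝ) (μ : Measure (Ω × X)) : Prop :=
  IsInvariant μP θ f μ ∧
    indPres μP θ f φ ψ =
      (((intJ μ ψ)⁻¹ : ℝ) : EReal) * fiberEntropy μP θ f μ
        + ((intJ μ φ / intJ μ ψ : ℝ) : EReal)

/-- The pair `(f,φ)` has an abundance of ergodic measures. -/
def Abundance [StandardBorelSpace X] [Nonempty X] (μP : Measure Ω) (θ : Ω → Ω)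
    (f : Ω → X → X) (φ : Ω → X → ℝ) : Prop :=
  ∀ μ : Measure (Ω × X), IsInvariant μP θ f μ →
    ∀ h : ℝ, (h : EReal) < fiberEntropy μP θ f μ → ∀ ε : ℝ, 0 < ε →
      ∃ ν : Measure (Ω × X), IsInvariant μP θ f ν ∧ Ergodic (skew θ f) ν ∧
        (h : EReal) < fiberEntropy μP θ f ν ∧ |intJ ν φ - intJ μ φ| < ε

/-- The pair `(f,Φ)` has an abundance of ergodic measures (higher-dimensional version). -/
def AbundanceVec [StandardBorelSpace X] [Nonempty X] (μP : Measure Ω) (θ : Ω → Ω)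
    (f : Ω → X → X) {d : ℕ} (Φ : Fin d → Ω → X → ℝ) : Prop :=
  ∀ μ : Measure (Ω × X), IsInvariant μP θ f μ →
    ∀ h : ℝ, (h : EReal) < fiberEntropy μP θ f μ → ∀ ε : ℝ, 0 < ε →
      ∃ ν : Measure (Ω × X), IsInvariant μP θ f ν ∧ Ergodic (skew θ f) ν ∧
        (h : EReal) < fiberEntropy μP θ f ν ∧ ∀ i, |intJ ν (Φ i) - intJ μ (Φ i)| < ε

/-- The entropy map `μ ↦ h^ran_μ(f)` is affine. -/
def EntropyAffine [StandardBorelSpace X] [Nonempty X] (μP : Measure Ω) (θ : Ω → Ω)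
    (f : Ω → X → X) : Prop :=
  ∀ μ ν : Measure (Ω × X), IsInvariant μP θ f μ → IsInvariant μP θ f ν →
    ∀ t : ℝ, 0 ≤ t → t ≤ 1 →
      fiberEntropy μP θ f (ENNReal.ofReal t • μ + ENNReal.ofReal (1 - t) • ν) =
        (t : EReal) * fiberEntropy μP θ f μ + ((1 - t : ℝ) : EReal) * fiberEntropy μP θ f ν

/-- The entropy map `μ ↦ h^ran_μ(f)` is upper semi-continuous on `M_ℙ(f)` with respect to the
weak* topology. -/
def EntropyUSC [StandardBorelSpace X] [Nonempty X] (μP : Measure Ω) (θ : Ω → Ω)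
    (f : Ω → X → X) : Prop :=
  @UpperSemicontinuousOn (Measure (Ω × X)) EReal (weakTopo μP) _
    (fun μ => fiberEntropy μP θ f μ) {μ | IsInvariant μP θ f μ}

end Defs


section AuxProof

set_option linter.unusedSectionVars false
set_option linter.unnecessarySimpa false

variable {Ω X : Type*} [MeasurableSpace Ω] [MetricSpace X]

section Aux

variable {f : Ω → X → X} {θ : Ω → Ω}

lemma fIter_cont (hfc : ∀ ω, Continuous (f ω)) (ω : Ω) (i : ℕ) :
    Continuous (fIter f θ ω i) := by
  induction i with
  | zero => exact continuous_id
  | succ n ih => exact (hfc _).comp ih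

variable [MeasurableSpace X] [BorelSpace X] [SecondCountableTopology X]

lemma fIter_meas (hfm : Measurable (Function.uncurry f)) (hθm : Measurable θ)
    (i : ℕ) (x : X) : Measurable fun ω => fIter f θ ω i x := by
  induction i with
  | zero => exact measurable_const
  | succ n ih =>
      exact hfm.comp (((hθm.iterate n)).prodMk ih)

lemma birk_cont (hfc : ∀ ω, Continuous (f ω)) {g : Ω → X → ℝ} (hg : ∀ ω, Continuous (g ω))
    (ω : Ω) (n : ℕ) : Continuous (birk f θ g ω n) := by
  unfold birk
  exact continuous_finset_sum _ fun i _ => (hg _).comp (fIter_cont hfc ω i)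

lemma birk_meas (hfm : Measurable (Function.uncurry f)) (hθm : Measurable θ)
    {g : Ω → X → ℝ} (hg : Measurable (Function.uncurry g)) (n : ℕ) (x : X) :
    Measurable fun ω => birk f θ g ω n x := by
  unfold birk
  refine Finset.measurable_sum _ fun i _ => ?_
  exact hg.comp ((hθm.iterate i).prodMk (fIter_meas hfm hθm i x))

lemma dB_nonneg (ω : Ω) (n : ℕ) (x y : X) : 0 ≤ dB f θ ω n x y := NNReal.coe_nonneg _

lemma dB_self (ω : Ω) (n : ℕ) (x : X) : dB f θ ω n x x = 0 := by
  unfold dB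
  norm_cast
  simp

lemma dB_symm (ω : Ω) (n : ℕ) (x y : X) : dB f θ ω n x y = dB f θ ω n y x := by
  unfold dB
  congr 1
  exact Finset.sup_congr rfl fun i _ => nndist_comm _ _

lemma dB_triangle (ω : Ω) (n : ℕ) (x y z : X) :
    dB f θ ω n x z ≤ dB f θ ω n x y + dB f θ ω n y z := by
  unfold dB
  rw [← NNReal.coe_add, NNReal.coe_le_coe]
  refine Finset.sup_le fun i hi => ?_
  refine le_trans (nndist_triangle _ (fIter f θ ω i y) _) (add_le_add ?_ ?_)
  · exact Finset.le_sup (f := fun i => nndist (fIter f θ ω i x) (fIter f θ ω i y)) hi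
  · exact Finset.le_sup (f := fun i => nndist (fIter f θ ω i y) (fIter f θ ω i z)) hi

lemma dB_cont (hfc : ∀ ω, Continuous (f ω)) (ω : Ω) (n : ℕ) :
    Continuous fun p : X × X => dB f θ ω n p.1 p.2 := by
  unfold dB
  refine NNReal.continuous_coe.comp ?_
  induction n with
  | zero => simpa using continuous_const
  | succ m ih =>
      simp only [Finset.range_add_one, Finset.sup_insert]
      exact Continuous.sup
        ((continuous_nndist).comp
          (((fIter_cont hfc ω m).comp continuous_fst).prodMk
            ((fIter_cont hfc ω m).comp continuous_snd))) ih

lemma dB_cont_right (hfc : ∀ ω, Continuous (f ω)) (ω : Ω) (n : ℕ) (x : X) :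
    Continuous fun y => dB f θ ω n x y :=
  (dB_cont hfc ω n).comp (Continuous.prodMk_right x)

lemma dB_meas (hfm : Measurable (Function.uncurry f)) (hθm : Measurable θ)
    (n : ℕ) (x y : X) : Measurable fun ω => dB f θ ω n x y := by
  unfold dB
  refine (measurable_coe_nnreal_real).comp ?_
  induction n with
  | zero => simpa using measurable_const
  | succ m ih =>
      simp only [Finset.range_add_one, Finset.sup_insert]
      exact Measurable.sup
        (measurable_nndist.comp ((fIter_meas hfm hθm m x).prodMk (fIter_meas hfm hθm m y))) ih

end Aux


section MasterInf

variable {Z : Type*} [MetricSpace Z] [CompactSpace Z] [SecondCountableTopology Z] [Nonempty Z]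

lemma bddBelow_range_of_cont {F : Z → ℝ} (hF : Continuous F) : BddBelow (Set.range F) := by
  obtain ⟨z₀, -, hz₀⟩ := isCompact_univ.exists_isMinOn ⟨Classical.arbitrary Z, trivial⟩
    hF.continuousOn
  exact ⟨F z₀, by rintro - ⟨z, rfl⟩; exact hz₀ (mem_univ z)⟩

lemma iInf_eq_min {F : Z → ℝ} (hF : Continuous F) : ∃ z₀, (⨅ z, F z) = F z₀ ∧ ∀ z, F z₀ ≤ F z := by
  obtain ⟨z₀, -, hz₀⟩ := isCompact_univ.exists_isMinOn ⟨Classical.arbitrary Z, trivial⟩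
    hF.continuousOn
  have h1 : ∀ z, F z₀ ≤ F z := fun z => hz₀ (mem_univ z)
  exact ⟨z₀, le_antisymm (ciInf_le (bddBelow_range_of_cont hF) z₀) (le_ciInf h1), h1⟩

lemma exists_le_iff_iInf_le {F : Z → ℝ} (hF : Continuous F) (c : ℝ) :
    (∃ z, F z ≤ c) ↔ (⨅ z, F z) ≤ c := by
  obtain ⟨z₀, h1, h2⟩ := iInf_eq_min hF
  constructor
  · rintro ⟨z, hz⟩; rw [h1]; exact le_trans (h2 z) hz
  · intro h; exact ⟨z₀, h1 ▸ h⟩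

lemma meas_iInf {F : Ω → Z → ℝ} (hc : ∀ ω, Continuous (F ω))
    (hm : ∀ z, Measurable fun ω => F ω z) : Measurable fun ω => ⨅ z, F ω z := by
  set u := TopologicalSpace.denseSeq Z
  have key : ∀ ω, (⨅ z, F ω z) = ⨅ n : ℕ, F ω (u n) := by
    intro ω
    obtain ⟨z₀, h1, h2⟩ := iInf_eq_min (hc ω)
    refine le_antisymm (le_ciInf fun n => ciInf_le (bddBelow_range_of_cont (hc ω)) (u n)) ?_
    rw [h1]
    refine le_of_forall_pos_le_add fun δ hδ => ?_
    have : {z | F ω z < F ω z₀ + δ}.Nonempty := ⟨z₀, by simp [hδ]⟩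
    have hopen : IsOpen {z | F ω z < F ω z₀ + δ} := isOpen_lt (hc ω) continuous_const
    obtain ⟨n, hn⟩ := (TopologicalSpace.denseRange_denseSeq Z).exists_mem_open hopen this
    calc (⨅ n : ℕ, F ω (u n)) ≤ F ω (u n) := by
          refine ciInf_le ?_ n
          exact BddBelow.mono (by rintro - ⟨n, rfl⟩; exact ⟨u n, rfl⟩)
            (bddBelow_range_of_cont (hc ω))
      _ ≤ F ω z₀ + δ := (hn).le
  simp_rw [key]
  exact Measurable.iInf fun n => hm (u n)

end MasterInf

section FinMin

variable {ι : Type*} {Z : Type*} [TopologicalSpace Z]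

lemma cont_inf' (s : Finset ι) (H : s.Nonempty) {g : ι → Z → ℝ} (hg : ∀ i, Continuous (g i)) :
    Continuous fun z => s.inf' H fun i => g i z := by
  induction H using Finset.Nonempty.cons_induction with
  | singleton a => simpa using hg a
  | cons a s ha hs ih =>
      simp only [Finset.inf'_cons (H := hs)]
      exact (hg a).min ih

lemma cont_sup' (s : Finset ι) (H : s.Nonempty) {g : ι → Z → ℝ} (hg : ∀ i, Continuous (g i)) :
    Continuous fun z => s.sup' H fun i => g i z := by
  induction H using Finset.Nonempty.cons_induction with
  | singleton a => simpa using hg a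
  | cons a s ha hs ih =>
      simp only [Finset.sup'_cons (H := hs)]
      exact (hg a).max ih

lemma meas_inf' (s : Finset ι) (H : s.Nonempty) {g : ι → Ω → ℝ} (hg : ∀ i, Measurable (g i)) :
    Measurable fun ω => s.inf' H fun i => g i ω := by
  induction H using Finset.Nonempty.cons_induction with
  | singleton a => simpa using hg a
  | cons a s ha hs ih =>
      simp only [Finset.inf'_cons (H := hs)]
      exact (hg a).min ih

lemma meas_sup' (s : Finset ι) (H : s.Nonempty) {g : ι → Ω → ℝ} (hg : ∀ i, Measurable (g i)) :
    Measurable fun ω => s.sup' H fun i => g i ω := by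
  induction H using Finset.Nonempty.cons_induction with
  | singleton a => simpa using hg a
  | cons a s ha hs ih =>
      simp only [Finset.sup'_cons (H := hs)]
      exact (hg a).max ih

end FinMin


section L3

set_option linter.unusedSectionVars false

variable {Ω X : Type*} [MeasurableSpace Ω] [MetricSpace X] [CompactSpace X]
  [SecondCountableTopology X] [Nonempty X] [MeasurableSpace X] [BorelSpace X]

variable (f : Ω → X → X) (θ : Ω → Ω) (ψ : Ω → X → ℝ)

/-- Quantitative span defect of a tuple `v` with respect to `X_{ω,n}`. -/
noncomputable def sdef (ω : Ω) (T : ℝ) (n : ℕ) {m : ℕ} (v : Fin (m + 1) → X) : ℝ :=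
  sSup ((fun y => Finset.univ.inf' Finset.univ_nonempty fun i => dB f θ ω n (v i) y) ''
    (Xind f θ ψ ω T n))

variable {f θ ψ}

lemma inf'_dB_cont (hfc : ∀ ω, Continuous (f ω)) (ω : Ω) (n : ℕ) {m : ℕ}
    (v : Fin (m + 1) → X) :
    Continuous fun y => Finset.univ.inf' Finset.univ_nonempty fun i => dB f θ ω n (v i) y :=
  cont_inf' _ _ fun i => dB_cont_right hfc ω n (v i)

lemma sdef_bddAbove (hfc : ∀ ω, Continuous (f ω)) (ω : Ω) (T : ℝ) (n : ℕ) {m : ℕ}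
    (v : Fin (m + 1) → X) :
    BddAbove ((fun y => Finset.univ.inf' Finset.univ_nonempty fun i => dB f θ ω n (v i) y) ''
      (Xind f θ ψ ω T n)) :=
  BddAbove.mono (image_mono (subset_univ _))
    (isCompact_univ.bddAbove_image (inf'_dB_cont hfc ω n v).continuousOn)

lemma sdef_nonneg (ω : Ω) (T : ℝ) (n : ℕ) {m : ℕ} (v : Fin (m + 1) → X) :
    0 ≤ sdef f θ ψ ω T n v := by
  refine Real.sSup_nonneg ?_
  rintro s ⟨y, -, rfl⟩
  exact Finset.le_inf' _ _ fun i _ => dB_nonneg ω n (v i) y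

lemma spanT_iff (hfc : ∀ ω, Continuous (f ω)) {ε : ℝ} (hε : 0 < ε) (ω : Ω) (T : ℝ) (n : ℕ)
    {m : ℕ} (v : Fin (m + 1) → X) :
    (∀ y ∈ Xind f θ ψ ω T n, ∃ i, dB f θ ω n (v i) y ≤ ε) ↔ sdef f θ ψ ω T n v ≤ ε := by
  constructor
  · intro h
    refine Real.sSup_le ?_ hε.le
    rintro s ⟨y, hy, rfl⟩
    obtain ⟨i, hi⟩ := h y hy
    exact le_trans (Finset.inf'_le _ (Finset.mem_univ i)) hi
  · intro h y hy
    have h1 : (Finset.univ.inf' Finset.univ_nonempty fun i => dB f θ ω n (v i) y) ≤ ε := by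
      refine le_trans (le_csSup (sdef_bddAbove hfc ω T n v) ⟨y, hy, rfl⟩) h
    obtain ⟨i, -, hi⟩ := Finset.exists_mem_eq_inf' Finset.univ_nonempty
      (fun i => dB f θ ω n (v i) y)
    exact ⟨i, by rw [← hi]; exact h1⟩

lemma sdef_cont (hfc : ∀ ω, Continuous (f ω)) (ω : Ω) (T : ℝ) (n : ℕ) (m : ℕ) :
    Continuous fun v : Fin (m + 1) → X => sdef f θ ψ ω T n v := by
  rw [continuous_iff_continuousAt]
  intro v
  rw [Metric.continuousAt_iff']
  intro η hη
  have hU : ∀ᶠ v' : Fin (m + 1) → X in nhds v, ∀ i, dB f θ ω n (v i) (v' i) < η / 2 := by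
    rw [eventually_all]
    intro i
    have hc : Continuous fun v' : Fin (m + 1) → X => dB f θ ω n (v i) (v' i) :=
      (dB_cont_right hfc ω n (v i)).comp (continuous_apply i)
    have : (fun v' : Fin (m + 1) → X => dB f θ ω n (v i) (v' i)) ⁻¹' (Set.Iio (η / 2)) ∈
        nhds v := by
      refine (hc.isOpen_preimage _ isOpen_Iio).mem_nhds ?_
      simp [dB_self, half_pos hη]
    exact Filter.eventually_of_mem this fun v' hv' => hv'
  filter_upwards [hU] with v' hv'
  have key : ∀ w w' : Fin (m + 1) → X, (∀ i, dB f θ ω n (w i) (w' i) < η / 2) →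
      sdef f θ ψ ω T n w' ≤ sdef f θ ψ ω T n w + η / 2 := by
    intro w w' hw
    refine Real.sSup_le ?_ (add_nonneg (sdef_nonneg ω T n w) (half_pos hη).le)
    rintro s ⟨y, hy, rfl⟩
    obtain ⟨j, -, hj⟩ := Finset.exists_mem_eq_inf' (Finset.univ_nonempty
      (α := Fin (m + 1))) (fun i => dB f θ ω n (w i) y)
    calc (Finset.univ.inf' Finset.univ_nonempty fun i => dB f θ ω n (w' i) y)
        ≤ dB f θ ω n (w' j) y := Finset.inf'_le _ (Finset.mem_univ j)
      _ ≤ dB f θ ω n (w' j) (w j) + dB f θ ω n (w j) y := dB_triangle ω n _ _ _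
      _ ≤ η / 2 + (Finset.univ.inf' Finset.univ_nonempty fun i => dB f θ ω n (w i) y) := by
          rw [← hj, dB_symm]
          exact add_le_add (hw j).le le_rfl
      _ ≤ η / 2 + sdef f θ ψ ω T n w := by
          refine add_le_add le_rfl (le_csSup (sdef_bddAbove hfc ω T n w) ⟨y, hy, rfl⟩)
      _ = sdef f θ ψ ω T n w + η / 2 := by ring
  have hv'2 : ∀ i, dB f θ ω n (v' i) (v i) < η / 2 := by
    intro i; rw [dB_symm]; exact hv' i
  have h1 := key v v' hv'
  have h2 := key v' v hv'2
  rw [Real.dist_eq, abs_sub_lt_iff]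
  constructor <;> linarith

lemma meas_exists_Xind (hfc : ∀ ω, Continuous (f ω)) (hfm : Measurable (Function.uncurry f))
    (hθm : Measurable θ) (hψc : ∀ ω, Continuous (ψ ω)) (hψm : Measurable (Function.uncurry ψ))
    {g : Ω → X → ℝ} (hgc : ∀ ω, Continuous (g ω)) (hgm : ∀ y, Measurable fun ω => g ω y)
    (T : ℝ) (n : ℕ) (u : ℝ) :
    MeasurableSet {ω | ∃ y ∈ Xind f θ ψ ω T n, u ≤ g ω y} := by
  have key : {ω | ∃ y ∈ Xind f θ ψ ω T n, u ≤ g ω y} =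
      ⋃ r : ℚ, {ω | T < (r : ℝ) ∧
        (⨅ y : X, max (birk f θ ψ ω n y - T)
          (max ((r : ℝ) - birk f θ ψ ω (n + 1) y) (u - g ω y))) ≤ 0} := by
    ext ω
    simp only [mem_iUnion, mem_setOf_eq]
    constructor
    · rintro ⟨y, ⟨hy1, hy2⟩, hy3⟩
      obtain ⟨r, hr1, hr2⟩ := exists_rat_btwn hy2
      refine ⟨r, hr1, ?_⟩
      rw [← exists_le_iff_iInf_le]
      · exact ⟨y, by simp only [max_le_iff]; exact ⟨by linarith, by linarith, by linarith⟩⟩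
      · refine Continuous.max ((birk_cont hfc hψc ω n).sub continuous_const)
          (Continuous.max (continuous_const.sub (birk_cont hfc hψc ω (n + 1)))
            (continuous_const.sub (hgc ω)))
    · rintro ⟨r, hr, hinf⟩
      rw [← exists_le_iff_iInf_le] at hinf
      · obtain ⟨y, hy⟩ := hinf
        simp only [max_le_iff] at hy
        exact ⟨y, ⟨by linarith [hy.1], by linarith [hy.2.1]⟩, by linarith [hy.2.2]⟩
      · refine Continuous.max ((birk_cont hfc hψc ω n).sub continuous_const)
          (Continuous.max (continuous_const.sub (birk_cont hfc hψc ω (n + 1)))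
            (continuous_const.sub (hgc ω)))
  rw [key]
  refine MeasurableSet.iUnion fun r => ?_
  rw [setOf_and]
  refine MeasurableSet.inter (MeasurableSet.const _) ?_
  have hmeas : Measurable fun ω => ⨅ y : X, max (birk f θ ψ ω n y - T)
      (max ((r : ℝ) - birk f θ ψ ω (n + 1) y) (u - g ω y)) := by
    refine meas_iInf ?_ ?_
    · intro ω
      exact Continuous.max ((birk_cont hfc hψc ω n).sub continuous_const)
        (Continuous.max (continuous_const.sub (birk_cont hfc hψc ω (n + 1)))
          (continuous_const.sub (hgc ω)))
    · intro y
      exact Measurable.max ((birk_meas hfm hθm hψm n y).sub measurable_const)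
        (Measurable.max (measurable_const.sub (birk_meas hfm hθm hψm (n + 1) y))
          (measurable_const.sub (hgm y)))
  exact hmeas measurableSet_Iic

lemma meas_Xind_nonempty (hfc : ∀ ω, Continuous (f ω)) (hfm : Measurable (Function.uncurry f))
    (hθm : Measurable θ) (hψc : ∀ ω, Continuous (ψ ω)) (hψm : Measurable (Function.uncurry ψ))
    (T : ℝ) (n : ℕ) :
    MeasurableSet {ω | (Xind f θ ψ ω T n).Nonempty} := by
  have : {ω | (Xind f θ ψ ω T n).Nonempty} =
      {ω | ∃ y ∈ Xind f θ ψ ω T n, (0 : ℝ) ≤ (fun (_ : Ω) (_ : X) => (0:ℝ)) ω y} := by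
    ext ω
    simp [Set.Nonempty]
  rw [this]
  exact meas_exists_Xind hfc hfm hθm hψc hψm (fun _ => continuous_const)
    (fun _ => measurable_const) T n 0

lemma sdef_meas (hfc : ∀ ω, Continuous (f ω)) (hfm : Measurable (Function.uncurry f))
    (hθm : Measurable θ) (hψc : ∀ ω, Continuous (ψ ω)) (hψm : Measurable (Function.uncurry ψ))
    (T : ℝ) (n : ℕ) {m : ℕ} (v : Fin (m + 1) → X) :
    Measurable fun ω => sdef f θ ψ ω T n v := by
  refine measurable_of_Ioi fun t => ?_
  have key : (fun ω => sdef f θ ψ ω T n v) ⁻¹' Ioi t =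
      {ω | ∃ y ∈ Xind f θ ψ ω T n,
        t < Finset.univ.inf' Finset.univ_nonempty fun i => dB f θ ω n (v i) y} ∪
      ({ω | ¬ (Xind f θ ψ ω T n).Nonempty} ∩ {ω | t < 0}) := by
    ext ω
    simp only [mem_preimage, mem_Ioi, mem_union, mem_inter_iff, mem_setOf_eq]
    rcases eq_empty_or_nonempty (Xind f θ ψ ω T n) with he | hne
    · have : sdef f θ ψ ω T n v = 0 := by
        unfold sdef; rw [he, image_empty, Real.sSup_empty]
      rw [this, he]
      simp [Set.not_nonempty_empty]
    · have hbdd := sdef_bddAbove (θ := θ) (ψ := ψ) hfc ω T n v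
      have hima : ((fun y => Finset.univ.inf' Finset.univ_nonempty fun i =>
          dB f θ ω n (v i) y) '' (Xind f θ ψ ω T n)).Nonempty := hne.image _
      constructor
      · intro h
        obtain ⟨s, ⟨y, hy, rfl⟩, hs⟩ := exists_lt_of_lt_csSup hima h
        exact Or.inl ⟨y, hy, hs⟩
      · rintro (⟨y, hy, hys⟩ | ⟨h1, -⟩)
        · exact lt_of_lt_of_le hys (le_csSup hbdd ⟨y, hy, rfl⟩)
        · exact absurd hne h1
  rw [key]
  refine MeasurableSet.union ?_ (MeasurableSet.inter
    ((meas_Xind_nonempty hfc hfm hθm hψc hψm T n).compl) (MeasurableSet.const _))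
  have : {ω | ∃ y ∈ Xind f θ ψ ω T n,
      t < Finset.univ.inf' Finset.univ_nonempty fun i => dB f θ ω n (v i) y} =
      ⋃ u : ℚ, {ω | t < (u : ℝ)} ∩ {ω | ∃ y ∈ Xind f θ ψ ω T n,
        (u : ℝ) ≤ Finset.univ.inf' Finset.univ_nonempty fun i => dB f θ ω n (v i) y} := by
    ext ω
    simp only [mem_iUnion, mem_inter_iff, mem_setOf_eq]
    constructor
    · rintro ⟨y, hy, hys⟩
      obtain ⟨u, hu1, hu2⟩ := exists_rat_btwn hys
      exact ⟨u, hu1, y, hy, hu2.le⟩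
    · rintro ⟨u, hu, y, hy, hys⟩
      exact ⟨y, hy, lt_of_lt_of_le hu hys⟩
  rw [this]
  refine MeasurableSet.iUnion fun u => MeasurableSet.inter (MeasurableSet.const _) ?_
  exact meas_exists_Xind hfc hfm hθm hψc hψm
    (fun ω => inf'_dB_cont hfc ω n v)
    (fun y => meas_inf' _ _ fun i => dB_meas hfm hθm n (v i) y) T n _

end L3


section L4

set_option linter.unusedSectionVars false

variable {Ω X : Type*} [MeasurableSpace Ω] [MetricSpace X] [CompactSpace X]
  [SecondCountableTopology X] [Nonempty X] [MeasurableSpace X] [BorelSpace X]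

variable (f : Ω → X → X) (θ : Ω → Ω) (φ ψ : Ω → X → ℝ)

/-- The set of weights of spanning sets of `X_{ω,n}`. -/
def QnSet (ω : Ω) (T ε : ℝ) (n : ℕ) : Set ℝ :=
  {s : ℝ | ∃ C : Finset X, IsSpan f θ ω n ε (Xind f θ ψ ω T n) C ∧
    s = ∑ x ∈ C, Real.exp (birk f θ φ ω n x)}

/-- `n`-th term of the induced spanning-sum. -/
noncomputable def Qn (ω : Ω) (T ε : ℝ) (n : ℕ) : ℝ := sInf (QnSet f θ φ ψ ω T ε n)

variable {f θ φ ψ}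

lemma exists_span (hfc : ∀ ω, Continuous (f ω)) (ω : Ω) (n : ℕ) {ε : ℝ} (hε : 0 < ε)
    (Y : Set X) : ∃ C : Finset X, IsSpan f θ ω n ε Y C := by
  classical
  -- uniform continuity gives a `δ`
  obtain ⟨δ, hδ, hdB⟩ : ∃ δ > 0, ∀ x y : X, dist x y < δ → dB f θ ω n x y ≤ ε := by
    set Φ : X → (Fin n → X) := fun x i => fIter f θ ω i x with hΦ
    have hΦc : Continuous Φ := continuous_pi fun i => fIter_cont hfc ω i
    have hΦu : UniformContinuous Φ := CompactSpace.uniformContinuous_of_continuous hΦc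
    obtain ⟨δ, hδ, hδ'⟩ := Metric.uniformContinuous_iff.1 hΦu ε hε
    refine ⟨δ, hδ, fun x y hxy => ?_⟩
    have h1 := hδ' hxy
    unfold dB
    rw [← Real.coe_toNNReal ε hε.le, NNReal.coe_le_coe]
    refine Finset.sup_le fun i hi => ?_
    rw [Finset.mem_range] at hi
    have h2 : dist (Φ x ⟨i, hi⟩) (Φ y ⟨i, hi⟩) < ε := lt_of_le_of_lt (dist_le_pi_dist _ _ _) h1
    rw [← NNReal.coe_le_coe, coe_nndist, Real.coe_toNNReal ε hε.le]
    exact h2.le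
  obtain ⟨t, -, htfin, htcov⟩ := finite_cover_balls_of_compact (isCompact_univ (X := X))
    (half_pos hδ)
  set pick : X → X := fun z =>
    if h : (Y ∩ Metric.ball z (δ / 2)).Nonempty then h.some else Classical.arbitrary X with hpick
  refine ⟨(htfin.toFinset.filter fun z => (Y ∩ Metric.ball z (δ / 2)).Nonempty).image pick,
    ?_, ?_⟩
  · intro x hx
    simp only [Finset.coe_image, Finset.coe_filter, mem_image, mem_setOf_eq] at hx
    obtain ⟨z, ⟨-, hz⟩, rfl⟩ := hx
    have := hz.some_mem
    rw [hpick]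
    simp only [dif_pos hz]
    exact this.1
  · intro y hy
    have : y ∈ ⋃ z ∈ t, Metric.ball z (δ / 2) := htcov (mem_univ y)
    simp only [mem_iUnion] at this
    obtain ⟨z, hzt, hzy⟩ := this
    have hzI : (Y ∩ Metric.ball z (δ / 2)).Nonempty := ⟨y, hy, hzy⟩
    refine ⟨pick z, Finset.mem_image_of_mem pick ?_, ?_⟩
    · rw [Finset.mem_filter, Set.Finite.mem_toFinset]
      exact ⟨hzt, hzI⟩
    · have hmem := hzI.some_mem
      have hp : pick z = hzI.some := by rw [hpick]; simp only [dif_pos hzI]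
      refine hdB _ _ ?_
      rw [hp]
      calc dist hzI.some y ≤ dist hzI.some z + dist z y := dist_triangle _ _ _
        _ < δ / 2 + δ / 2 := by
            refine add_lt_add (Metric.mem_ball.1 hmem.2) ?_
            rw [dist_comm]; exact Metric.mem_ball.1 hzy
        _ = δ := by ring

lemma QnSet_nonneg (ω : Ω) (T ε : ℝ) (n : ℕ) : ∀ s ∈ QnSet f θ φ ψ ω T ε n, 0 ≤ s := by
  rintro s ⟨C, -, rfl⟩
  exact Finset.sum_nonneg fun x _ => (Real.exp_pos _).le

lemma QnSet_bddBelow (ω : Ω) (T ε : ℝ) (n : ℕ) : BddBelow (QnSet f θ φ ψ ω T ε n) :=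
  ⟨0, fun s hs => QnSet_nonneg ω T ε n s hs⟩

lemma QnSet_nonempty (hfc : ∀ ω, Continuous (f ω)) (ω : Ω) (T : ℝ) {ε : ℝ} (hε : 0 < ε)
    (n : ℕ) : (QnSet f θ φ ψ ω T ε n).Nonempty := by
  obtain ⟨C, hC⟩ := exists_span (θ := θ) hfc ω n hε (Xind f θ ψ ω T n)
  exact ⟨_, C, hC, rfl⟩

lemma Qn_nonneg (hfc : ∀ ω, Continuous (f ω)) (ω : Ω) (T : ℝ) {ε : ℝ} (hε : 0 < ε) (n : ℕ) :
    0 ≤ Qn f θ φ ψ ω T ε n :=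
  le_csInf (QnSet_nonempty hfc ω T hε n) (QnSet_nonneg ω T ε n)

lemma Qn_eq_zero (ω : Ω) (T ε : ℝ) (n : ℕ) (h : Xind f θ ψ ω T n = ∅) :
    Qn f θ φ ψ ω T ε n = 0 := by
  have : QnSet f θ φ ψ ω T ε n = {0} := by
    ext s
    simp only [QnSet, mem_setOf_eq, mem_singleton_iff]
    constructor
    · rintro ⟨C, hC, rfl⟩
      have : C = ∅ := by
        rw [← Finset.coe_eq_empty]
        rw [h] at hC
        exact eq_empty_of_subset_empty hC.1
      simp [this]
    · rintro rfl
      refine ⟨∅, ⟨?_, ?_⟩, by simp⟩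
      · simp
      · intro y hy
        rw [h] at hy
        exact absurd hy (notMem_empty y)
  rw [Qn, this, csInf_singleton]

lemma sum_image_le_tuple {ι : Type*} [DecidableEq X] [DecidableEq ι] (s : Finset ι) (v : ι → X) (g : X → ℝ)
    (hg : ∀ x, 0 ≤ g x) : ∑ x ∈ s.image v, g x ≤ ∑ i ∈ s, g (v i) := by
  induction s using Finset.cons_induction with
  | empty => simp
  | cons a s ha ih =>
      rw [Finset.cons_eq_insert, Finset.image_insert, Finset.sum_insert ha]
      by_cases hmem : v a ∈ s.image v
      · rw [Finset.insert_eq_self.2 hmem]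
        exact le_add_of_nonneg_of_le (hg _) ih
      · rw [Finset.sum_insert hmem]
        exact add_le_add le_rfl ih

lemma measE (hfc : ∀ ω, Continuous (f ω)) (hfm : Measurable (Function.uncurry f))
    (hθm : Measurable θ) (hψc : ∀ ω, Continuous (ψ ω)) (hψm : Measurable (Function.uncurry ψ))
    (hφc : ∀ ω, Continuous (φ ω)) (hφm : Measurable (Function.uncurry φ))
    (T : ℝ) {ε : ℝ} (hε : 0 < ε) (q : ℝ) (n m : ℕ) :
    MeasurableSet {ω | ∃ v : Fin (m + 1) → X,
      (∀ i, v i ∈ Xind f θ ψ ω T n) ∧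
      (∀ y ∈ Xind f θ ψ ω T n, ∃ i, dB f θ ω n (v i) y ≤ ε) ∧
      (∑ i, Real.exp (birk f θ φ ω n (v i))) ≤ q} := by
  set G : ℚ → Ω → (Fin (m + 1) → X) → ℝ := fun r ω v =>
    max (Finset.univ.sup' Finset.univ_nonempty fun i => birk f θ ψ ω n (v i) - T)
      (max (Finset.univ.sup' Finset.univ_nonempty fun i => (r : ℝ) - birk f θ ψ ω (n + 1) (v i))
        (max (sdef f θ ψ ω T n v - ε)
          ((∑ i, Real.exp (birk f θ φ ω n (v i))) - q))) with hG
  have hGcont : ∀ (r : ℚ) (ω : Ω), Continuous (G r ω) := by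
    intro r ω
    refine Continuous.max ?_ (Continuous.max ?_ (Continuous.max ?_ ?_))
    · exact cont_sup' _ _ fun i =>
        ((birk_cont hfc hψc ω n).comp (continuous_apply i)).sub continuous_const
    · exact cont_sup' _ _ fun i =>
        continuous_const.sub ((birk_cont hfc hψc ω (n + 1)).comp (continuous_apply i))
    · exact (sdef_cont hfc ω T n m).sub continuous_const
    · exact (continuous_finset_sum _ fun i _ => Real.continuous_exp.comp
        ((birk_cont hfc hφc ω n).comp (continuous_apply i))).sub continuous_const
  have key : {ω | ∃ v : Fin (m + 1) → X,
      (∀ i, v i ∈ Xind f θ ψ ω T n) ∧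
      (∀ y ∈ Xind f θ ψ ω T n, ∃ i, dB f θ ω n (v i) y ≤ ε) ∧
      (∑ i, Real.exp (birk f θ φ ω n (v i))) ≤ q} =
      ⋃ r : ℚ, {ω | T < (r : ℝ)} ∩ {ω | (⨅ v : Fin (m + 1) → X, G r ω v) ≤ 0} := by
    ext ω
    simp only [mem_iUnion, mem_inter_iff, mem_setOf_eq]
    constructor
    · rintro ⟨v, h1, h2, h3⟩
      have hb : T < Finset.univ.inf' Finset.univ_nonempty
          fun i => birk f θ ψ ω (n + 1) (v i) := by
        rw [Finset.lt_inf'_iff]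
        exact fun i _ => (h1 i).2
      obtain ⟨r, hr1, hr2⟩ := exists_rat_btwn hb
      refine ⟨r, hr1, ?_⟩
      rw [← exists_le_iff_iInf_le (hGcont r ω)]
      refine ⟨v, ?_⟩
      rw [hG]
      simp only [max_le_iff]
      refine ⟨?_, ?_, ?_, ?_⟩
      · exact Finset.sup'_le _ _ fun i _ => sub_nonpos.2 (h1 i).1
      · exact Finset.sup'_le _ _ fun i _ => sub_nonpos.2
          (le_trans hr2.le (Finset.inf'_le _ (Finset.mem_univ i)))
      · exact sub_nonpos.2 ((spanT_iff hfc hε ω T n v).1 h2)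
      · exact sub_nonpos.2 h3
    · rintro ⟨r, hr, hinf⟩
      rw [← exists_le_iff_iInf_le (hGcont r ω)] at hinf
      obtain ⟨v, hv⟩ := hinf
      rw [hG] at hv
      simp only [max_le_iff] at hv
      obtain ⟨hA, hB, hC, hD⟩ := hv
      rw [Finset.sup'_le_iff] at hA hB
      refine ⟨v, fun i => ⟨sub_nonpos.1 (hA i (Finset.mem_univ i)), ?_⟩,
        (spanT_iff hfc hε ω T n v).2 (sub_nonpos.1 hC), sub_nonpos.1 hD⟩
      have := sub_nonpos.1 (hB i (Finset.mem_univ i))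
      linarith
  rw [key]
  refine MeasurableSet.iUnion fun r => MeasurableSet.inter (MeasurableSet.const _) ?_
  have hmeas : Measurable fun ω => ⨅ v : Fin (m + 1) → X, G r ω v := by
    refine meas_iInf (hGcont r) ?_
    intro v
    refine Measurable.max ?_ (Measurable.max ?_ (Measurable.max ?_ ?_))
    · exact meas_sup' _ _ fun i => (birk_meas hfm hθm hψm n (v i)).sub measurable_const
    · exact meas_sup' _ _ fun i =>
        measurable_const.sub (birk_meas hfm hθm hψm (n + 1) (v i))
    · exact (sdef_meas hfc hfm hθm hψc hψm T n v).sub measurable_const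
    · exact (Finset.measurable_sum _ fun i _ =>
        (Real.measurable_exp.comp (birk_meas hfm hθm hφm n (v i)))).sub measurable_const
  exact hmeas measurableSet_Iic

lemma Qn_meas (hfc : ∀ ω, Continuous (f ω)) (hfm : Measurable (Function.uncurry f))
    (hθm : Measurable θ) (hψc : ∀ ω, Continuous (ψ ω)) (hψm : Measurable (Function.uncurry ψ))
    (hφc : ∀ ω, Continuous (φ ω)) (hφm : Measurable (Function.uncurry φ))
    (T : ℝ) {ε : ℝ} (hε : 0 < ε) (n : ℕ) :
    Measurable fun ω => Qn f θ φ ψ ω T ε n := by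
  classical
  refine measurable_of_Iio fun c => ?_
  have key : (fun ω => Qn f θ φ ψ ω T ε n) ⁻¹' Iio c =
      ⋃ q : ℚ, {ω | (q : ℝ) < c} ∩
        (({ω | ¬ (Xind f θ ψ ω T n).Nonempty} ∩ {ω | (0:ℝ) ≤ (q : ℝ)}) ∪
          ⋃ m : ℕ, {ω | ∃ v : Fin (m + 1) → X,
            (∀ i, v i ∈ Xind f θ ψ ω T n) ∧
            (∀ y ∈ Xind f θ ψ ω T n, ∃ i, dB f θ ω n (v i) y ≤ ε) ∧
            (∑ i, Real.exp (birk f θ φ ω n (v i))) ≤ (q : ℝ)}) := by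
    ext ω
    simp only [mem_preimage, mem_Iio, mem_iUnion, mem_inter_iff, mem_union, mem_setOf_eq]
    constructor
    · intro hQ
      obtain ⟨s, ⟨C, hC, rfl⟩, hs⟩ :=
        exists_lt_of_csInf_lt (QnSet_nonempty hfc ω T hε n) hQ
      rcases Finset.eq_empty_or_nonempty C with rfl | hCne
      · simp only [Finset.sum_empty] at hs
        obtain ⟨q, hq1, hq2⟩ := exists_rat_btwn hs
        refine ⟨q, hq2, Or.inl ⟨?_, hq1.le⟩⟩
        intro hne
        obtain ⟨y, hy⟩ := hne
        obtain ⟨x, hx, -⟩ := hC.2 y hy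
        exact absurd hx (Finset.notMem_empty x)
      · obtain ⟨q, hq1, hq2⟩ := exists_rat_btwn hs
        obtain ⟨m, hm⟩ : ∃ m, C.card = m + 1 :=
          ⟨C.card - 1, (Nat.succ_pred_eq_of_pos (Finset.card_pos.2 hCne)).symm⟩
        set e : Fin (m + 1) ≃ {x // x ∈ C} := (finCongr hm.symm).trans C.equivFin.symm with he
        set v : Fin (m + 1) → X := fun i => (e i : X) with hv
        have hvC : ∀ i, v i ∈ C := fun i => (e i).2
        have hsum : (∑ i, Real.exp (birk f θ φ ω n (v i))) =
            ∑ x ∈ C, Real.exp (birk f θ φ ω n x) := by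
          rw [hv]
          rw [Fintype.sum_equiv e (fun i => Real.exp (birk f θ φ ω n (e i : X)))
            (fun a => Real.exp (birk f θ φ ω n (a : X))) (fun i => rfl)]
          exact Finset.sum_coe_sort C fun x => Real.exp (birk f θ φ ω n x)
        refine ⟨q, hq2, Or.inr ⟨m, v, fun i => hC.1 (hvC i), ?_, by rw [hsum]; exact hq1.le⟩⟩
        intro y hy
        obtain ⟨x, hx, hdB⟩ := hC.2 y hy
        refine ⟨e.symm ⟨x, hx⟩, ?_⟩
        have : v (e.symm ⟨x, hx⟩) = x := by rw [hv]; simp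
        rw [this]
        exact hdB
    · rintro ⟨q, hqc, h | ⟨m, v, h1, h2, h3⟩⟩
      · have hXe : Xind f θ ψ ω T n = ∅ := not_nonempty_iff_eq_empty.1 h.1
        have h0 : (0 : ℝ) ∈ QnSet f θ φ ψ ω T ε n := by
          refine ⟨∅, ⟨by simp, fun y hy => ?_⟩, by simp⟩
          rw [hXe] at hy
          exact absurd hy (notMem_empty y)
        exact lt_of_le_of_lt (csInf_le (QnSet_bddBelow ω T ε n) h0)
          (lt_of_le_of_lt h.2 hqc)
      · set C : Finset X := Finset.univ.image v with hCdef
        have hmem : ∑ x ∈ C, Real.exp (birk f θ φ ω n x) ∈ QnSet f θ φ ψ ω T ε n := by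
          refine ⟨C, ⟨?_, ?_⟩, rfl⟩
          · intro x hx
            simp only [hCdef, Finset.coe_image, mem_image, Finset.mem_coe] at hx
            obtain ⟨i, -, rfl⟩ := hx
            exact h1 i
          · intro y hy
            obtain ⟨i, hi⟩ := h2 y hy
            exact ⟨v i, Finset.mem_image_of_mem v (Finset.mem_univ i), hi⟩
        refine lt_of_le_of_lt (csInf_le (QnSet_bddBelow ω T ε n) hmem) ?_
        refine lt_of_le_of_lt ?_ hqc
        refine le_trans (sum_image_le_tuple Finset.univ v _
          fun x => (Real.exp_pos _).le) h3
  rw [key]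
  refine MeasurableSet.iUnion fun q => MeasurableSet.inter (MeasurableSet.const _) ?_
  refine MeasurableSet.union (MeasurableSet.inter
    ((meas_Xind_nonempty hfc hfm hθm hψc hψm T n).compl) (MeasurableSet.const _)) ?_
  exact MeasurableSet.iUnion fun m => measE hfc hfm hθm hψc hψm hφc hφm T hε (q : ℝ) n m

end L4

section L5

set_option linter.unusedSectionVars false

variable {Ω X : Type*} [MeasurableSpace Ω] [MetricSpace X] [CompactSpace X]
  [SecondCountableTopology X] [Nonempty X] [MeasurableSpace X] [BorelSpace X]

variable {f : Ω → X → X} {θ : Ω → Ω} {φ ψ : Ω → X → ℝ}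

lemma ae_eventually_Xind_empty (μP : Measure Ω) [IsProbabilityMeasure μP]
    (hθm : Measurable θ) (hmp : MeasurePreserving θ μP μP)
    (hψc : ∀ ω, Continuous (ψ ω)) (hψm : Measurable (Function.uncurry ψ))
    (hψpos : ∀ᵐ ω ∂μP, 0 < ⨅ x : X, ψ ω x) (T : ℝ) :
    ∀ᵐ ω ∂μP, ∃ N, ∀ n ≥ N, Xind f θ ψ ω T n = ∅ := by
  set F : Ω → ℝ := fun ω => ⨅ x : X, ψ ω x with hF
  have hFm : Measurable F :=
    meas_iInf hψc fun x => hψm.comp (measurable_id.prodMk measurable_const)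
  set s : ℕ → Ω → ℝ := fun n ω => ∑ i ∈ Finset.range n, F (θ^[i] ω) with hs
  have hsm : ∀ n, Measurable (s n) := fun n =>
    Finset.measurable_sum _ fun i _ => hFm.comp (hθm.iterate i)
  set G : Set Ω := {ω | ∀ M : ℕ, ∃ N : ℕ, ∀ k : ℕ, (M : ℝ) ≤ s (N + k) ω} with hG
  have hGm : MeasurableSet G := by
    rw [hG]
    rw [setOf_forall]
    refine MeasurableSet.iInter fun M => ?_
    rw [setOf_exists]
    refine MeasurableSet.iUnion fun N => ?_
    rw [setOf_forall]
    exact MeasurableSet.iInter fun k => measurableSet_le measurable_const (hsm (N + k))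
  -- the bad sets
  have hBnull : μP {ω | ¬ 0 < F ω} = 0 := by
    rw [← ae_iff]; exact hψpos
  have hae : ∀ᵐ ω ∂μP, ∀ i : ℕ, 0 < F (θ^[i] ω) := by
    rw [ae_all_iff]
    intro i
    have hpre : {ω | ¬ 0 < F (θ^[i] ω)} = (θ^[i]) ⁻¹' {ω | ¬ 0 < F ω} := rfl
    rw [ae_iff, hpre, (hmp.iterate i).measure_preimage]
    · exact hBnull
    · exact ((measurableSet_lt measurable_const hFm).compl).nullMeasurableSet
  -- μP Gᶜ = 0
  have hGc : μP Gᶜ = 0 := by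
    set B : ℕ → Set Ω := fun m => {ω | F ω ≤ 1 / (m + 1)} with hB
    have hBm : ∀ m, MeasurableSet (B m) := fun m => measurableSet_le hFm measurable_const
    have key : ∀ ω, ω ∈ Gᶜ → (∀ i : ℕ, 0 < F (θ^[i] ω)) →
        ∀ m : ℕ, ∃ N : ℕ, ∀ k : ℕ, θ^[N + k] ω ∈ B m := by
      intro ω hω hpos m
      -- partial sums are bounded
      simp only [hG, mem_compl_iff, mem_setOf_eq, not_forall, not_exists, not_le] at hω
      obtain ⟨M, hM⟩ := hω
      have hmono : Monotone fun n => s n ω := by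
        intro a b hab
        refine Finset.sum_le_sum_of_subset_of_nonneg (Finset.range_subset_range.2 hab) ?_
        exact fun i _ _ => (hpos i).le
      have hbound : ∀ n, s n ω ≤ M := by
        intro n
        obtain ⟨k, hk⟩ := hM n
        exact le_trans (hmono (Nat.le_add_right n k)) (hk).le
      have hsumm : Summable fun i => F (θ^[i] ω) :=
        summable_of_sum_range_le (fun i => (hpos i).le) hbound
      have htend : Filter.Tendsto (fun i => F (θ^[i] ω)) atTop (nhds 0) :=
        hsumm.tendsto_atTop_zero
      have hev : ∀ᶠ i in (atTop : Filter ℕ), F (θ^[i] ω) ≤ 1 / (m + 1) := by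
        have hnb : ∀ᶠ x : ℝ in nhds (0 : ℝ), x ≤ 1 / ((m : ℝ) + 1) :=
          Filter.eventually_of_mem (Iic_mem_nhds (by positivity)) fun x hx => hx
        exact htend.eventually hnb
      obtain ⟨N, hN⟩ := Filter.eventually_atTop.1 hev
      exact ⟨N, fun k => hN (N + k) (Nat.le_add_right N k)⟩
    have hsub : Gᶜ ∩ {ω | ∀ i : ℕ, 0 < F (θ^[i] ω)} ⊆
        ⋂ m : ℕ, ⋃ N : ℕ, ⋂ k : ℕ, (θ^[N + k]) ⁻¹' (B m) := by
      intro ω ⟨h1, h2⟩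
      simp only [mem_iInter, mem_iUnion, mem_preimage]
      intro m
      obtain ⟨N, hN⟩ := key ω h1 h2 m
      exact ⟨N, fun k => hN k⟩
    have hDm : ∀ m, μP (⋃ N : ℕ, ⋂ k : ℕ, (θ^[N + k]) ⁻¹' (B m)) ≤ μP (B m) := by
      intro m
      have hMono : Monotone fun N : ℕ => ⋂ k : ℕ, (θ^[N + k]) ⁻¹' (B m) := by
        intro a b hab
        refine subset_iInter fun k => ?_
        have : a + (b - a + k) = b + k := by omega
        exact iInter_subset_of_subset (b - a + k) (by rw [this])
      rw [(Monotone.directed_le hMono).measure_iUnion]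
      refine iSup_le fun N => ?_
      refine le_trans (measure_mono (iInter_subset _ 0)) ?_
      rw [(hmp.iterate (N + 0)).measure_preimage (hBm m).nullMeasurableSet]
    have hInter : μP (⋂ m : ℕ, B m) = 0 := by
      refine measure_mono_null ?_ hBnull
      intro ω hω
      simp only [mem_iInter, hB, mem_setOf_eq] at hω
      simp only [mem_setOf_eq, not_lt]
      by_contra h
      push_neg at h
      obtain ⟨m, hm⟩ := exists_nat_one_div_lt h
      exact absurd (hω m) (not_le.2 hm)
    have htendB : Filter.Tendsto (fun m => μP (B m)) atTop (nhds (μP (⋂ m, B m))) := by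
      refine tendsto_measure_iInter_atTop (fun m => (hBm m).nullMeasurableSet) ?_ ⟨0, measure_ne_top _ _⟩
      intro a b hab
      intro ω hω
      simp only [hB, mem_setOf_eq] at hω ⊢
      refine le_trans hω ?_
      rw [div_le_div_iff₀ (by positivity) (by positivity)]
      have : (a : ℝ) ≤ b := Nat.cast_le.2 hab
      nlinarith
    have hle : μP (Gᶜ ∩ {ω | ∀ i : ℕ, 0 < F (θ^[i] ω)}) ≤ μP (⋂ m, B m) := by
      refine ge_of_tendsto htendB ?_
      refine Filter.Eventually.of_forall fun m => ?_
      exact le_trans (measure_mono (hsub.trans (iInter_subset _ m))) (hDm m)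
    have h1 : μP (Gᶜ ∩ {ω | ∀ i : ℕ, 0 < F (θ^[i] ω)}) = 0 :=
      le_antisymm (le_trans hle (le_of_eq hInter)) zero_le
    have h2 : μP ({ω | ∀ i : ℕ, 0 < F (θ^[i] ω)}ᶜ) = 0 := by
      rw [compl_setOf]
      exact ae_iff.1 hae
    refine le_antisymm ?_ zero_le
    calc μP Gᶜ ≤ μP ((Gᶜ ∩ {ω | ∀ i : ℕ, 0 < F (θ^[i] ω)}) ∪
        {ω | ∀ i : ℕ, 0 < F (θ^[i] ω)}ᶜ) := by
          refine measure_mono fun ω hω => ?_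
          by_cases h : ∀ i : ℕ, 0 < F (θ^[i] ω)
          · exact Or.inl ⟨hω, h⟩
          · exact Or.inr h
      _ ≤ μP (Gᶜ ∩ {ω | ∀ i : ℕ, 0 < F (θ^[i] ω)}) +
          μP ({ω | ∀ i : ℕ, 0 < F (θ^[i] ω)}ᶜ) := measure_union_le _ _
      _ = 0 := by rw [h1, h2, add_zero]
  -- conclude
  have hGae : ∀ᵐ ω ∂μP, ω ∈ G := by
    rw [ae_iff]
    exact hGc
  filter_upwards [hGae] with ω hω
  obtain ⟨M, hM⟩ := exists_nat_gt T
  obtain ⟨N, hN⟩ := hω M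
  refine ⟨N, fun n hn => ?_⟩
  rw [eq_empty_iff_forall_notMem]
  rintro x ⟨hx1, -⟩
  have hbirk : s n ω ≤ birk f θ ψ ω n x := by
    refine Finset.sum_le_sum fun i _ => ?_
    exact ciInf_le (bddBelow_range_of_cont (hψc (θ^[i] ω))) (fIter f θ ω i x)
  obtain ⟨k, rfl⟩ := Nat.exists_eq_add_of_le hn
  exact absurd hx1 (not_le.2 (lt_of_lt_of_le hM (le_trans (hN k) hbirk)))

end L5

section L6

set_option linter.unusedSectionVars false

variable {Ω X : Type*} [MeasurableSpace Ω] [MetricSpace X] [CompactSpace X]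
  [SecondCountableTopology X] [Nonempty X] [MeasurableSpace X] [BorelSpace X]

variable {f : Ω → X → X} {θ : Ω → Ω} {φ ψ : Ω → X → ℝ}

lemma Qind_eq_sum (hfc : ∀ ω, Continuous (f ω)) (ω : Ω) (T : ℝ) {ε : ℝ} (hε : 0 < ε)
    {N : ℕ} (hN : ∀ n ≥ N, Xind f θ ψ ω T n = ∅) :
    Qind f θ φ ψ ω T ε = ∑ n ∈ Finset.range N, Qn f θ φ ψ ω T ε n := by
  have hzero : ∀ (C : ℕ → Finset X),
      (∀ n, IsSpan f θ ω n ε (Xind f θ ψ ω T n) (C n)) →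
      ∀ n, n ∉ Finset.range N → (∑ x ∈ C n, Real.exp (birk f θ φ ω n x)) = 0 := by
    intro C hC n hn
    rw [Finset.mem_range, not_lt] at hn
    have : C n = ∅ := by
      rw [← Finset.coe_eq_empty]
      have := (hC n).1
      rw [hN n hn] at this
      exact eq_empty_of_subset_empty this
    simp [this]
  have hbdd : BddBelow {s : ℝ | ∃ C : ℕ → Finset X,
      (∀ n, IsSpan f θ ω n ε (Xind f θ ψ ω T n) (C n)) ∧
      s = ∑' n : ℕ, ∑ x ∈ C n, Real.exp (birk f θ φ ω n x)} := by
    refine ⟨0, ?_⟩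
    rintro s ⟨C, hC, rfl⟩
    exact tsum_nonneg fun n => Finset.sum_nonneg fun x _ => (Real.exp_pos _).le
  have hfamily : ∀ δ' : ℝ, 0 < δ' → ∃ C : ℕ → Finset X,
      (∀ n, IsSpan f θ ω n ε (Xind f θ ψ ω T n) (C n)) ∧
      ∀ n, (∑ x ∈ C n, Real.exp (birk f θ φ ω n x)) ≤ Qn f θ φ ψ ω T ε n + δ' := by
    intro δ' hδ'
    have hex : ∀ n, ∃ C : Finset X, IsSpan f θ ω n ε (Xind f θ ψ ω T n) C ∧
        (∑ x ∈ C, Real.exp (birk f θ φ ω n x)) ≤ Qn f θ φ ψ ω T ε n + δ' := by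
      intro n
      obtain ⟨s, ⟨C, hC, rfl⟩, hlt⟩ := exists_lt_of_csInf_lt
        (QnSet_nonempty hfc ω T hε n) (lt_add_of_pos_right (Qn f θ φ ψ ω T ε n) hδ')
      exact ⟨C, hC, hlt.le⟩
    choose C hC hCsum using hex
    exact ⟨C, hC, hCsum⟩
  have hne : {s : ℝ | ∃ C : ℕ → Finset X,
      (∀ n, IsSpan f θ ω n ε (Xind f θ ψ ω T n) (C n)) ∧
      s = ∑' n : ℕ, ∑ x ∈ C n, Real.exp (birk f θ φ ω n x)}.Nonempty := by
    obtain ⟨C, hC, -⟩ := hfamily 1 one_pos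
    exact ⟨_, C, hC, rfl⟩
  refine le_antisymm ?_ ?_
  · refine le_of_forall_pos_le_add fun δ hδ => ?_
    obtain ⟨C, hC, hCsum⟩ := hfamily (δ / (N + 1)) (by positivity)
    have hmem : (∑ n ∈ Finset.range N, ∑ x ∈ C n, Real.exp (birk f θ φ ω n x)) ∈
        {s : ℝ | ∃ C : ℕ → Finset X,
          (∀ n, IsSpan f θ ω n ε (Xind f θ ψ ω T n) (C n)) ∧
          s = ∑' n : ℕ, ∑ x ∈ C n, Real.exp (birk f θ φ ω n x)} := by
      exact ⟨C, hC, (tsum_eq_sum (hzero C hC)).symm⟩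
    refine le_trans (csInf_le hbdd hmem) ?_
    calc (∑ n ∈ Finset.range N, ∑ x ∈ C n, Real.exp (birk f θ φ ω n x))
        ≤ ∑ n ∈ Finset.range N, (Qn f θ φ ψ ω T ε n + δ / (N + 1)) :=
          Finset.sum_le_sum fun n _ => hCsum n
      _ = (∑ n ∈ Finset.range N, Qn f θ φ ψ ω T ε n) + N * (δ / (N + 1)) := by
          rw [Finset.sum_add_distrib, Finset.sum_const, Finset.card_range, nsmul_eq_mul]
      _ ≤ (∑ n ∈ Finset.range N, Qn f θ φ ψ ω T ε n) + δ := by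
          have h1 : (N : ℝ) * (δ / (N + 1)) ≤ δ := by
            rw [mul_div_assoc']
            rw [div_le_iff₀ (by positivity)]
            nlinarith [Nat.cast_nonneg (α := ℝ) N]
          linarith
  · refine le_csInf hne ?_
    rintro s ⟨C, hC, rfl⟩
    rw [tsum_eq_sum (hzero C hC)]
    refine Finset.sum_le_sum fun n _ => ?_
    exact csInf_le (QnSet_bddBelow ω T ε n) ⟨C n, hC n, rfl⟩

end L6

end AuxProof


theorem statement_2
    {Ω X : Type*} [MeasurableSpace Ω] [StandardBorelSpace Ω]
    [MetricSpace X] [CompactSpace X] [SecondCountableTopology X] [Nonempty X]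
    [MeasurableSpace X] [BorelSpace X] [StandardBorelSpace X]
    (μP : Measure Ω) [IsProbabilityMeasure μP] [μP.IsComplete]
    (θ : Ω → Ω) (hθm : Measurable θ) (hθbij : Function.Bijective θ) (hθerg : Ergodic θ μP)
    (f : Ω → X → X) (hfm : Measurable (Function.uncurry f)) (hfc : ∀ ω, Continuous (f ω))
    (φ ψ : Ω → X → ℝ) (hφ : MemL1 μP φ) (hψ : MemL1 μP ψ)
    (hψpos : ∀ᵐ ω ∂μP, 0 < ⨅ x : X, ψ ω x)
    :
    ∀ T : ℝ, 0 < T → ∀ ε : ℝ, 0 < ε → Measurable fun ω => Qind f θ φ ψ ω T ε := by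
  intro T hT ε hε
  obtain ⟨hφm, hφc, -⟩ := hφ
  obtain ⟨hψm, hψc, -⟩ := hψ
  have hmp : MeasurePreserving θ μP μP := hθerg.toMeasurePreserving
  rw [← aemeasurable_iff_measurable (μ := μP)]
  refine ⟨fun ω => (∑' n : ℕ, ENNReal.ofReal (Qn f θ φ ψ ω T ε n)).toReal, ?_, ?_⟩
  · refine Measurable.ennreal_toReal ?_
    exact Measurable.ennreal_tsum fun n =>
      (Qn_meas hfc hfm hθm hψc hψm hφc hφm T hε n).ennreal_ofReal
  · filter_upwards [ae_eventually_Xind_empty μP hθm hmp hψc hψm hψpos T] with ω hω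
    obtain ⟨N, hN⟩ := hω
    rw [Qind_eq_sum hfc ω T hε hN]
    have hz : ∀ n : ℕ, n ∉ Finset.range N → ENNReal.ofReal (Qn f θ φ ψ ω T ε n) = 0 := by
      intro n hn
      rw [Finset.mem_range, not_lt] at hn
      rw [Qn_eq_zero ω T ε n (hN n hn), ENNReal.ofReal_zero]
    rw [tsum_eq_sum hz, ← ENNReal.ofReal_sum_of_nonneg fun n _ => Qn_nonneg hfc ω T hε n,
      ENNReal.toReal_ofReal (Finset.sum_nonneg fun n _ => Qn_nonneg hfc ω T hε n)]

end RDSPaper
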